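/- Let μ : 𝒳 → [0,1] be measurable with sup_{x ∈ 𝒳} |μ(x) − μ_0(x)| ≤ s, and suppose the margin condition P( |μ_0(X) − 1/2| < t ) ≤ κ t holds for every t > 0, where κ > 0. Set b_0(x) = 1{μ_0(x) > 1/2} and f(x) = 1{μ(x) > 1/2}. Then 0 ≤ P(Y = b_0(X)) − P(Y = f(X)) ≤ 4 κ s². -/

import Mathlib

open MeasureTheory ProbabilityTheory

/-- If `sup_x |μ(x) − μ0(x)| ≤ s` and the margin condition `P(|μ0(X) − 1/2| < t) ≤ κ t`
holds for all `t > 0`, then with `b0 = 1{μ0 > 1/2}` and `f = 1{μ > 1/2}`,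
`0 ≤ P(Y = b0(X)) − P(Y = f(X)) ≤ 4 κ s²`. -/
theorem stmt7 {Ω 𝒳 : Type*} [MeasurableSpace Ω] [MeasurableSpace 𝒳]
    (P : Measure Ω) [IsProbabilityMeasure P]
    (X : Ω → 𝒳) (hX : Measurable X)
    (Y : Ω → ℝ) (hY : Measurable Y) (hY01 : ∀ ω, Y ω = 0 ∨ Y ω = 1)
    (μ0 : 𝒳 → ℝ) (hμ0 : Measurable μ0) (hμ0mem : ∀ x, μ0 x ∈ Set.Icc (0 : ℝ) 1)
    (hcond : (fun ω => μ0 (X ω)) =ᵐ[P] P[Y | MeasurableSpace.comap X inferInstance])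
    (μ : 𝒳 → ℝ) (hμ : Measurable μ) (hμmem : ∀ x, μ x ∈ Set.Icc (0 : ℝ) 1)
    (s : ℝ) (hs : ∀ x, |μ x - μ0 x| ≤ s)
    (κ : ℝ) (hκ : 0 < κ)
    (hmargin : ∀ t > (0 : ℝ), (P {ω | |μ0 (X ω) - 1 / 2| < t}).toReal ≤ κ * t)
    (b0 : 𝒳 → ℝ) (hb0 : ∀ x, b0 x = if 1 / 2 < μ0 x then 1 else 0)
    (f : 𝒳 → ℝ) (hf : ∀ x, f x = if 1 / 2 < μ x then 1 else 0) :
    0 ≤ (P {ω | Y ω = b0 (X ω)}).toReal - (P {ω | Y ω = f (X ω)}).toReal ∧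
    (P {ω | Y ω = b0 (X ω)}).toReal - (P {ω | Y ω = f (X ω)}).toReal ≤ 4 * κ * s ^ 2 := by
  classical
  have hΩ : Nonempty Ω := by
    by_contra h
    rw [not_nonempty_iff] at h
    have h1 := measure_univ (μ := P)
    rw [Set.univ_eq_empty_iff.mpr h, measure_empty] at h1
    exact zero_ne_one h1
  obtain ⟨ω0⟩ := hΩ
  have hs0 : 0 ≤ s := le_trans (abs_nonneg _) (hs (X ω0))
  have hm : MeasurableSpace.comap X inferInstance ≤ (inferInstance : MeasurableSpace Ω) :=
    hX.comap_le
  have intbdd : ∀ (g : Ω → ℝ) (C : ℝ), Measurable g → (∀ ω, |g ω| ≤ C) → Integrable g P :=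
    fun g C hg hb => ⟨hg.aestronglyMeasurable,
      HasFiniteIntegral.of_bounded (C := C) (ae_of_all _ fun ω => by
        rw [Real.norm_eq_abs]; exact hb ω)⟩
  have hYint : Integrable Y P := intbdd Y 1 hY (fun ω => by rcases hY01 ω with h | h <;> simp [h])
  have iμ : Integrable (fun ω => μ0 (X ω)) P := intbdd _ 1 (hμ0.comp hX) (fun ω => by
    obtain ⟨ha, hb⟩ := hμ0mem (X ω); rw [abs_le]; exact ⟨by linarith, hb⟩)
  -- key conditional expectation property
  have key : ∀ S : Set Ω, MeasurableSet[MeasurableSpace.comap X inferInstance] S →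
      ∫ ω in S, Y ω ∂P = ∫ ω in S, μ0 (X ω) ∂P := by
    intro S hS
    have h1 : ∫ ω in S, μ0 (X ω) ∂P
        = ∫ ω in S, (P[Y | MeasurableSpace.comap X inferInstance]) ω ∂P :=
      setIntegral_congr_ae (hm S hS) (hcond.mono fun ω h _ => h)
    rw [h1, setIntegral_condExp hm hYint hS]
  -- main identity for a {0,1}-valued classifier
  have ident : ∀ (h : 𝒳 → ℝ), Measurable h → (∀ x, h x = 0 ∨ h x = 1) →
      (P {ω | Y ω = h (X ω)}).toReal
        = ∫ ω, (h (X ω) * (2 * μ0 (X ω) - 1) + (1 - μ0 (X ω))) ∂P := by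
    intro h hh hh01
    set A : Set Ω := X ⁻¹' {x | h x = 1} with hA_def
    have hA_comap : MeasurableSet[MeasurableSpace.comap X inferInstance] A :=
      ⟨{x | h x = 1}, measurableSet_eq_fun hh measurable_const, rfl⟩
    have hA : MeasurableSet A := hm A hA_comap
    have hE : MeasurableSet {ω | Y ω = h (X ω)} :=
      measurableSet_eq_fun hY (hh.comp hX)
    have e1 : ∀ ω, Set.indicator {ω | Y ω = h (X ω)} (fun _ => (1 : ℝ)) ω
        = 2 * A.indicator Y ω - A.indicator (fun _ => (1 : ℝ)) ω + (1 - Y ω) := by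
      intro ω
      rcases hY01 ω with h1 | h1 <;> rcases hh01 (X ω) with h2 | h2 <;>
        simp [Set.indicator_apply, hA_def, Set.mem_preimage, Set.mem_setOf_eq, h1, h2] <;>
        norm_num
    have i1 : Integrable (A.indicator Y) P := hYint.indicator hA
    have i2 : Integrable (A.indicator fun _ => (1 : ℝ)) P := (integrable_const _).indicator hA
    have iμA : Integrable (A.indicator fun ω => μ0 (X ω)) P := iμ.indicator hA
    have e2 : ∀ ω, h (X ω) * (2 * μ0 (X ω) - 1) + (1 - μ0 (X ω))
        = 2 * A.indicator (fun ω => μ0 (X ω)) ω - A.indicator (fun _ => (1 : ℝ)) ω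
          + (1 - μ0 (X ω)) := by
      intro ω
      rcases hh01 (X ω) with h2 | h2 <;>
        simp [Set.indicator_apply, hA_def, Set.mem_preimage, Set.mem_setOf_eq, h2] <;> ring
    have keyA : ∫ ω, A.indicator Y ω ∂P = ∫ ω, A.indicator (fun ω => μ0 (X ω)) ω ∂P := by
      rw [integral_indicator hA, integral_indicator hA]
      exact key A hA_comap
    have keyU : ∫ ω, Y ω ∂P = ∫ ω, μ0 (X ω) ∂P := by
      have h1 := key Set.univ MeasurableSet.univ
      simpa using h1
    calc (P {ω | Y ω = h (X ω)}).toReal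
        = ∫ ω, Set.indicator {ω | Y ω = h (X ω)} (fun _ => (1 : ℝ)) ω ∂P := by
          rw [integral_indicator_const (1 : ℝ) hE, smul_eq_mul, mul_one]; rfl
      _ = ∫ ω, (2 * A.indicator Y ω - A.indicator (fun _ => (1 : ℝ)) ω + (1 - Y ω)) ∂P :=
          integral_congr_ae (ae_of_all _ e1)
      _ = 2 * (∫ ω, A.indicator Y ω ∂P) - (∫ ω, A.indicator (fun _ => (1 : ℝ)) ω ∂P)
          + (1 - ∫ ω, Y ω ∂P) := by
          have i1' : Integrable (fun ω => 2 * A.indicator Y ω) P := i1.const_mul 2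
          have i2' : Integrable (fun ω => A.indicator (fun _ => (1 : ℝ)) ω) P := i2
          have iF : Integrable
              (fun ω => 2 * A.indicator Y ω - A.indicator (fun _ => (1 : ℝ)) ω) P := i1'.sub i2'
          have iG : Integrable (fun ω => 1 - Y ω) P := (integrable_const 1).sub hYint
          simp only [integral_add iF iG, integral_sub i1' i2', integral_const_mul,
            integral_sub (integrable_const (1 : ℝ)) hYint, integral_const, measure_univ, probReal_univ,
            ENNReal.toReal_one, smul_eq_mul, one_mul]
      _ = 2 * (∫ ω, A.indicator (fun ω => μ0 (X ω)) ω ∂P)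
          - (∫ ω, A.indicator (fun _ => (1 : ℝ)) ω ∂P) + (1 - ∫ ω, μ0 (X ω) ∂P) := by
          rw [keyA, keyU]
      _ = ∫ ω, (2 * A.indicator (fun ω => μ0 (X ω)) ω - A.indicator (fun _ => (1 : ℝ)) ω
          + (1 - μ0 (X ω))) ∂P := by
          have i1' : Integrable (fun ω => 2 * A.indicator (fun ω => μ0 (X ω)) ω) P :=
            iμA.const_mul 2
          have i2' : Integrable (fun ω => A.indicator (fun _ => (1 : ℝ)) ω) P := i2
          have iF : Integrable (fun ω => 2 * A.indicator (fun ω => μ0 (X ω)) ω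
              - A.indicator (fun _ => (1 : ℝ)) ω) P := i1'.sub i2'
          have iG : Integrable (fun ω => 1 - μ0 (X ω)) P := (integrable_const 1).sub iμ
          simp only [integral_add iF iG, integral_sub i1' i2', integral_const_mul,
            integral_sub (integrable_const (1 : ℝ)) iμ, integral_const, measure_univ, probReal_univ,
            ENNReal.toReal_one, smul_eq_mul, one_mul]
      _ = ∫ ω, (h (X ω) * (2 * μ0 (X ω) - 1) + (1 - μ0 (X ω))) ∂P :=
          integral_congr_ae (ae_of_all _ fun ω => (e2 ω).symm)
  -- measurability and values of b0, f
  have hb0fun : b0 = fun x => if 1 / 2 < μ0 x then (1 : ℝ) else 0 := funext hb0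
  have hffun : f = fun x => if 1 / 2 < μ x then (1 : ℝ) else 0 := funext hf
  have hb0m : Measurable b0 := by
    rw [hb0fun]
    exact Measurable.ite (measurableSet_lt measurable_const hμ0) measurable_const measurable_const
  have hfm : Measurable f := by
    rw [hffun]
    exact Measurable.ite (measurableSet_lt measurable_const hμ) measurable_const measurable_const
  have hb001 : ∀ x, b0 x = 0 ∨ b0 x = 1 := fun x => by rw [hb0]; split_ifs <;> simp
  have hf01 : ∀ x, f x = 0 ∨ f x = 1 := fun x => by rw [hf]; split_ifs <;> simp
  have intExpr : ∀ (h : 𝒳 → ℝ), Measurable h → (∀ x, h x = 0 ∨ h x = 1) →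
      Integrable (fun ω => h (X ω) * (2 * μ0 (X ω) - 1) + (1 - μ0 (X ω))) P := by
    intro h hh hh01
    refine intbdd _ 2 (((hh.comp hX).mul
      ((measurable_const.mul (hμ0.comp hX)).sub measurable_const)).add
      (measurable_const.sub (hμ0.comp hX))) (fun ω => ?_)
    obtain ⟨ha, hb⟩ := hμ0mem (X ω)
    rcases hh01 (X ω) with h1 | h1 <;> rw [h1, abs_le] <;> constructor <;> nlinarith
  -- the regret as an integral
  set g : Ω → ℝ := fun ω => (b0 (X ω) - f (X ω)) * (2 * μ0 (X ω) - 1) with hg_def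
  have hgm : Measurable g := ((hb0m.comp hX).sub (hfm.comp hX)).mul
    ((measurable_const.mul (hμ0.comp hX)).sub measurable_const)
  have hgint : Integrable g P := by
    refine intbdd g 2 hgm (fun ω => ?_)
    obtain ⟨ha, hb⟩ := hμ0mem (X ω)
    rcases hb001 (X ω) with h1 | h1 <;> rcases hf01 (X ω) with h2 | h2 <;>
      simp only [hg_def, h1, h2] <;> rw [abs_le] <;> constructor <;> nlinarith
  have hregret : (P {ω | Y ω = b0 (X ω)}).toReal - (P {ω | Y ω = f (X ω)}).toReal
      = ∫ ω, g ω ∂P := by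
    rw [ident b0 hb0m hb001, ident f hfm hf01,
      ← integral_sub (intExpr b0 hb0m hb001) (intExpr f hfm hf01)]
    exact integral_congr_ae (ae_of_all _ fun ω => by simp only [hg_def]; ring)
  have hg_nonneg : ∀ ω, 0 ≤ g ω := by
    intro ω
    simp only [hg_def, hb0, hf]
    split_ifs <;> nlinarith
  constructor
  · rw [hregret]
    exact integral_nonneg hg_nonneg
  · rcases eq_or_lt_of_le hs0 with hs0' | hs0'
    · -- s = 0 : μ = μ0 and f = b0
      have hfb : f = b0 := funext fun x => by
        have h1 : μ x = μ0 x := by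
          have h2 := hs x
          rw [← hs0'] at h2
          have h3 := abs_nonneg (μ x - μ0 x)
          have : μ x - μ0 x = 0 := abs_eq_zero.mp (le_antisymm h2 h3)
          linarith
        rw [hf, hb0, h1]
      rw [hfb, sub_self, ← hs0']
      norm_num
    · -- s > 0
      set T : Set Ω := {ω | |μ0 (X ω) - 1 / 2| < 2 * s} with hT_def
      have hTmeas : MeasurableSet T :=
        measurableSet_lt (((hμ0.comp hX).sub measurable_const).abs) measurable_const
      have hbound : ∀ ω, g ω ≤ T.indicator (fun _ => 2 * s) ω := by
        intro ω
        have habs := abs_le.mp (hs (X ω))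
        by_cases hT : ω ∈ T
        · rw [Set.indicator_of_mem hT]
          simp only [hg_def, hb0, hf]
          split_ifs <;> nlinarith
        · rw [Set.indicator_of_notMem hT]
          have h2 : 2 * s ≤ |μ0 (X ω) - 1 / 2| := not_lt.mp hT
          rcases abs_cases (μ0 (X ω) - 1 / 2) with ⟨he, hsign⟩ | ⟨he, hsign⟩ <;>
            rw [he] at h2 <;> simp only [hg_def, hb0, hf] <;> split_ifs <;> nlinarith
      have hind : Integrable (T.indicator fun _ => 2 * s) P :=
        (integrable_const _).indicator hTmeas
      have h1 : ∫ ω, g ω ∂P ≤ ∫ ω, T.indicator (fun _ => 2 * s) ω ∂P :=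
        integral_mono hgint hind hbound
      have h2 : ∫ ω, T.indicator (fun _ => 2 * s) ω ∂P = (P T).toReal * (2 * s) := by
        rw [integral_indicator_const _ hTmeas, smul_eq_mul]; rfl
      have h3 : (P T).toReal ≤ κ * (2 * s) := hmargin (2 * s) (by linarith)
      rw [hregret]
      calc ∫ ω, g ω ∂P ≤ (P T).toReal * (2 * s) := by rw [← h2]; exact h1
        _ ≤ κ * (2 * s) * (2 * s) := by nlinarith [ENNReal.toReal_nonneg (a := P T)]
        _ = 4 * κ * s ^ 2 := by ring
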